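/- If p is an equilibrium density of the mixed model (p = μT_D[p] + (1−μ)T[p]) with mean w, then its first four moments are M_1 = w, M_2 = 3w²/(2−μ), M_3 = 3(4+μ)w³/(2−μ)², and M_4 = 5(μ²+8μ+12)w⁴/(2−μ)³. -/

import Mathlib

open MeasureTheory Real Set
open scoped ENNReal

/-- S[p](x) = ∫_x^∞ p(u)/u du. -/
noncomputable def S (p : ℝ → ℝ) (x : ℝ) : ℝ := ∫ u in Set.Ioi x, p u / u

/-- T[p] = S[p] * S[p] (convolution on [0,∞)). -/
noncomputable def T (p : ℝ → ℝ) (x : ℝ) : ℝ := ∫ v in (0:ℝ)..x, S p (x - v) * S p v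

/-- The Directed Random Market operator. -/
noncomputable def TD (p : ℝ → ℝ) (x : ℝ) : ℝ :=
  (1 / 2) * (∫ u in (0:ℝ)..x, p (x - u) * S p u) + (1 / 2) * S p x

/-- Laplace transform of a density on [0,∞). -/
noncomputable def L (p : ℝ → ℝ) (s : ℝ) : ℝ := ∫ x in Set.Ioi (0:ℝ), Real.exp (-s * x) * p x

lemma lint_Ioi_of_zero (g : ℝ → ℝ≥0∞) (h : ∀ x ≤ 0, g x = 0) :
    ∫⁻ x, g x = ∫⁻ x in Set.Ioi (0:ℝ), g x := by
  rw [← lintegral_indicator measurableSet_Ioi]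
  congr 1
  funext x
  by_cases hx : x ∈ Set.Ioi (0:ℝ)
  · simp [hx]
  · simp only [Set.indicator_of_notMem hx]
    exact (h x (by simpa using hx))

lemma ofReal_add_pow (u v : ℝ) (hu : 0 ≤ u) (hv : 0 ≤ v) (k : ℕ) :
    ENNReal.ofReal ((u + v) ^ k)
      = ∑ j ∈ Finset.range (k + 1),
          (k.choose j : ℝ≥0∞) * ENNReal.ofReal (v ^ (k - j)) * ENNReal.ofReal (u ^ j) := by
  rw [add_pow, ENNReal.ofReal_sum_of_nonneg]
  · refine Finset.sum_congr rfl fun j hj => ?_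
    rw [ENNReal.ofReal_mul (by positivity), ENNReal.ofReal_mul (by positivity),
      ENNReal.ofReal_natCast]
    ring
  · intro j hj
    positivity

lemma conv_lintegral_moment (φ ψ : ℝ → ℝ≥0∞) (hφ : Measurable φ) (hψ : Measurable ψ)
    (hφ0 : ∀ x ≤ 0, φ x = 0) (hψ0 : ∀ x ≤ 0, ψ x = 0) (k : ℕ) :
    ∫⁻ x in Set.Ioi (0:ℝ), ENNReal.ofReal (x ^ k) * ∫⁻ v, φ (x - v) * ψ v
      = ∑ j ∈ Finset.range (k + 1), (k.choose j : ℝ≥0∞) *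
          ((∫⁻ u in Set.Ioi (0:ℝ), ENNReal.ofReal (u ^ j) * φ u) *
            ∫⁻ v in Set.Ioi (0:ℝ), ENNReal.ofReal (v ^ (k - j)) * ψ v) := by
  have hAeq : ∀ j : ℕ, (∫⁻ u in Set.Ioi (0:ℝ), ENNReal.ofReal (u ^ j) * φ u)
      = ∫⁻ u, ENNReal.ofReal (u ^ j) * φ u := by
    intro j
    rw [← lint_Ioi_of_zero]
    intro u hu; rw [hφ0 u hu, mul_zero]
  have hBeq : ∀ j : ℕ, (∫⁻ v in Set.Ioi (0:ℝ), ENNReal.ofReal (v ^ j) * ψ v)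
      = ∫⁻ v, ENNReal.ofReal (v ^ j) * ψ v := by
    intro j
    rw [← lint_Ioi_of_zero]
    intro v hv; rw [hψ0 v hv, mul_zero]
  have hinner0 : ∀ x ≤ (0:ℝ), (∫⁻ v, φ (x - v) * ψ v) = 0 := by
    intro x hx
    have : ∀ v : ℝ, φ (x - v) * ψ v = 0 := by
      intro v
      rcases le_or_gt v 0 with hv | hv
      · rw [hψ0 v hv, mul_zero]
      · rw [hφ0 (x - v) (by linarith), zero_mul]
    simp [this]
  have hmeasH : Measurable (Function.uncurry fun x v =>
      ENNReal.ofReal (x ^ k) * (φ (x - v) * ψ v)) := by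
    apply Measurable.mul
    · exact (measurable_fst.pow_const k).ennreal_ofReal
    · exact ((hφ.comp (measurable_fst.sub measurable_snd)).mul (hψ.comp measurable_snd))
  calc
    ∫⁻ x in Set.Ioi (0:ℝ), ENNReal.ofReal (x ^ k) * ∫⁻ v, φ (x - v) * ψ v
        = ∫⁻ x, ENNReal.ofReal (x ^ k) * ∫⁻ v, φ (x - v) * ψ v := by
          rw [← lint_Ioi_of_zero]
          intro x hx
          rw [hinner0 x hx, mul_zero]
    _ = ∫⁻ x, ∫⁻ v, ENNReal.ofReal (x ^ k) * (φ (x - v) * ψ v) := by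
          congr 1; funext x
          rw [lintegral_const_mul' _ _ ENNReal.ofReal_ne_top]
    _ = ∫⁻ v, ∫⁻ x, ENNReal.ofReal (x ^ k) * (φ (x - v) * ψ v) := by
          exact lintegral_lintegral_swap hmeasH.aemeasurable
    _ = ∫⁻ v, (∫⁻ u, ENNReal.ofReal ((u + v) ^ k) * φ u) * ψ v := by
          congr 1; funext v
          calc
            ∫⁻ x, ENNReal.ofReal (x ^ k) * (φ (x - v) * ψ v)
                = ∫⁻ x, (fun u => ENNReal.ofReal ((u + v) ^ k) * φ u) (x - v) * ψ v := by
                  congr 1; funext x; simp only [sub_add_cancel]; ring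
            _ = (∫⁻ x, (fun u => ENNReal.ofReal ((u + v) ^ k) * φ u) (x - v)) * ψ v := by
                  exact lintegral_mul_const _
                    ((((measurable_id.sub_const v).add_const v).pow_const k).ennreal_ofReal.mul
                      (hφ.comp (measurable_id.sub_const v)))
            _ = (∫⁻ u, ENNReal.ofReal ((u + v) ^ k) * φ u) * ψ v := by
                  rw [lintegral_sub_right_eq_self
                    (fun u => ENNReal.ofReal ((u + v) ^ k) * φ u) v]
    _ = ∫⁻ v in Set.Ioi (0:ℝ), (∫⁻ u, ENNReal.ofReal ((u + v) ^ k) * φ u) * ψ v := by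
          rw [← lint_Ioi_of_zero]
          intro v hv; rw [hψ0 v hv, mul_zero]
    _ = ∫⁻ v in Set.Ioi (0:ℝ), ∑ j ∈ Finset.range (k + 1),
          ((k.choose j : ℝ≥0∞) * (∫⁻ u, ENNReal.ofReal (u ^ j) * φ u)) *
            (ENNReal.ofReal (v ^ (k - j)) * ψ v) := by
          apply setLIntegral_congr_fun measurableSet_Ioi
          intro v hv; beta_reduce
          have hIu : (∫⁻ u, ENNReal.ofReal ((u + v) ^ k) * φ u)
              = ∫⁻ u in Set.Ioi (0:ℝ), ENNReal.ofReal ((u + v) ^ k) * φ u := by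
            rw [← lint_Ioi_of_zero]
            intro u hu; rw [hφ0 u hu, mul_zero]
          rw [hIu]
          have hexp : (∫⁻ u in Set.Ioi (0:ℝ), ENNReal.ofReal ((u + v) ^ k) * φ u)
              = ∫⁻ u in Set.Ioi (0:ℝ), ∑ j ∈ Finset.range (k + 1),
                  ((k.choose j : ℝ≥0∞) * ENNReal.ofReal (v ^ (k - j))) *
                    (ENNReal.ofReal (u ^ j) * φ u) := by
            apply setLIntegral_congr_fun measurableSet_Ioi
            intro u hu; beta_reduce
            rw [ofReal_add_pow u v (le_of_lt hu) (le_of_lt hv), Finset.sum_mul]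
            refine Finset.sum_congr rfl fun j hj => ?_
            ring
          rw [hexp, lintegral_finset_sum']
          · rw [Finset.sum_mul]
            refine Finset.sum_congr rfl fun j hj => ?_
            rw [lintegral_const_mul' _ _ (by
              exact ENNReal.mul_ne_top (ENNReal.natCast_ne_top _) ENNReal.ofReal_ne_top)]
            rw [hAeq j]
            ring
          · intro j hj
            exact AEMeasurable.const_mul ((measurable_id'.pow_const j).ennreal_ofReal.mul hφ).aemeasurable _
    _ = ∑ j ∈ Finset.range (k + 1), (k.choose j : ℝ≥0∞) *
          ((∫⁻ u in Set.Ioi (0:ℝ), ENNReal.ofReal (u ^ j) * φ u) *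
            ∫⁻ v in Set.Ioi (0:ℝ), ENNReal.ofReal (v ^ (k - j)) * ψ v) := by
          rw [lintegral_finset_sum']
          · refine Finset.sum_congr rfl fun j hj => ?_
            rw [lintegral_const_mul'' (f := fun v => ENNReal.ofReal (v ^ (k - j)) * ψ v) _
              (((measurable_id'.pow_const (k - j)).ennreal_ofReal.mul hψ).aemeasurable.restrict)]
            rw [hAeq j]
            ring
          · intro j hj
            exact AEMeasurable.const_mul
              ((measurable_id'.pow_const (k - j)).ennreal_ofReal.mul hψ).aemeasurable.restrict _

section
variable {p : ℝ → ℝ}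

lemma S_eq (hS : IntegrableOn (fun u => p u / u) (Set.Ioi 0)) {x : ℝ} (hx : 0 < x) :
    S p x = (∫ u in Set.Ioi (0:ℝ), p u / u) - ∫ u in Set.Ioc (0:ℝ) x, p u / u := by
  have hu : Set.Ioc (0:ℝ) x ∪ Set.Ioi x = Set.Ioi 0 := Ioc_union_Ioi_eq_Ioi hx.le
  have h1 : IntegrableOn (fun u => p u / u) (Set.Ioc (0:ℝ) x) :=
    hS.mono_set (by rw [← hu]; exact subset_union_left)
  have h2 : IntegrableOn (fun u => p u / u) (Set.Ioi x) :=
    hS.mono_set (by rw [← hu]; exact subset_union_right)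
  have := setIntegral_union Ioc_disjoint_Ioi_same measurableSet_Ioi h1 h2 (f := fun u => p u / u)
    (μ := volume)
  rw [hu] at this
  rw [S, this]
  ring

lemma S_nonneg (hpnn : ∀ x, 0 ≤ p x) {x : ℝ} (hx : 0 < x) : 0 ≤ S p x := by
  apply setIntegral_nonneg measurableSet_Ioi
  intro u hu
  exact div_nonneg (hpnn u) (le_of_lt (hx.trans hu))

lemma S_le (hpnn : ∀ x, 0 ≤ p x) (hS : IntegrableOn (fun u => p u / u) (Set.Ioi 0))
    {x : ℝ} (hx : 0 < x) : S p x ≤ ∫ u in Set.Ioi (0:ℝ), p u / u := by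
  apply setIntegral_mono_set hS
  · filter_upwards [ae_restrict_mem measurableSet_Ioi] with u hu
    exact div_nonneg (hpnn u) (le_of_lt hu)
  · exact HasSubset.Subset.eventuallyLE (Ioi_subset_Ioi hx.le)

lemma F_mono (hpnn : ∀ x, 0 ≤ p x) (hS : IntegrableOn (fun u => p u / u) (Set.Ioi 0)) :
    Monotone (fun x => ∫ u in Set.Ioc (0:ℝ) x, p u / u) := by
  intro x y hxy
  simp only
  rcases le_or_gt y 0 with hy | hy
  · rw [Ioc_eq_empty (by simpa using hxy.trans hy), Ioc_eq_empty (by simpa using hy)]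
  rcases le_or_gt x 0 with hx | hx
  · rw [Ioc_eq_empty (by simpa using hx)]
    simp only [Measure.restrict_empty, integral_zero_measure]
    apply setIntegral_nonneg measurableSet_Ioc
    intro u hu
    exact div_nonneg (hpnn u) hu.1.le
  · apply setIntegral_mono_set (hS.mono_set (Ioc_subset_Ioi_self))
    · filter_upwards [ae_restrict_mem measurableSet_Ioc] with u hu
      exact div_nonneg (hpnn u) hu.1.le
    · exact HasSubset.Subset.eventuallyLE (Ioc_subset_Ioc_right hxy)

lemma Sm_measurable (hpnn : ∀ x, 0 ≤ p x) (hS : IntegrableOn (fun u => p u / u) (Set.Ioi 0)) :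
    Measurable (fun x => (∫ u in Set.Ioi (0:ℝ), p u / u) - ∫ u in Set.Ioc (0:ℝ) x, p u / u) :=
  measurable_const.sub (F_mono hpnn hS).measurable

lemma S_moment (hpm : Measurable p) (hpnn : ∀ x, 0 ≤ p x)
    (hS : IntegrableOn (fun u => p u / u) (Set.Ioi 0)) (k : ℕ)
    (hmk : IntegrableOn (fun x => x ^ k * p x) (Set.Ioi 0)) :
    ∫⁻ x in Set.Ioi (0:ℝ), ENNReal.ofReal (x ^ k * S p x)
      = ENNReal.ofReal ((∫ x in Set.Ioi (0:ℝ), x ^ k * p x) / (k + 1)) := by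
  set K : ℝ × ℝ → ℝ≥0∞ := fun z =>
    if 0 < z.1 ∧ z.1 < z.2 then ENNReal.ofReal (z.1 ^ k) * ENNReal.ofReal (p z.2 / z.2) else 0
    with hK
  have hKmeas : Measurable K := by
    apply Measurable.ite
    · exact (measurableSet_lt measurable_const measurable_fst).inter
        (measurableSet_lt measurable_fst measurable_snd)
    · exact ((measurable_fst.pow_const k).ennreal_ofReal.mul
        ((hpm.comp measurable_snd).div measurable_snd).ennreal_ofReal)
    · exact measurable_const
  have step1 : ∫⁻ x in Set.Ioi (0:ℝ), ENNReal.ofReal (x ^ k * S p x)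
      = ∫⁻ x, ∫⁻ u, K (x, u) := by
    rw [lint_Ioi_of_zero (fun x => ∫⁻ u, K (x, u)) ?_]
    · apply setLIntegral_congr_fun measurableSet_Ioi
      intro x hx; beta_reduce
      have hx' : (0:ℝ) < x := hx
      have h1 : ENNReal.ofReal (x ^ k * S p x)
          = ENNReal.ofReal (x ^ k) * ENNReal.ofReal (S p x) :=
        ENNReal.ofReal_mul (by positivity)
      have h2 : ENNReal.ofReal (S p x) = ∫⁻ u in Set.Ioi x, ENNReal.ofReal (p u / u) := by
        rw [S]
        apply ofReal_integral_eq_lintegral_ofReal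
          (hS.mono_set (Ioi_subset_Ioi hx.le))
        filter_upwards [ae_restrict_mem measurableSet_Ioi] with u hu
        exact div_nonneg (hpnn u) (le_of_lt (hx.trans hu))
      have h3 : ∀ᵐ u : ℝ, K (x, u)
          = (Set.Ioi x).indicator (fun u => ENNReal.ofReal (x ^ k) * ENNReal.ofReal (p u / u)) u := by
        filter_upwards with u
        by_cases hu : x < u
        · simp [hK, hx', hu, Set.indicator_of_mem (show u ∈ Set.Ioi x from hu)]
        · simp [hK, hu, Set.indicator_of_notMem (show u ∉ Set.Ioi x from hu)]
      rw [h1, h2, lintegral_congr_ae h3, lintegral_indicator measurableSet_Ioi,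
        lintegral_const_mul' _ _ ENNReal.ofReal_ne_top]
    · intro x hx
      have : ∀ u : ℝ, K (x, u) = 0 := by
        intro u
        simp [hK, not_lt.mpr hx]
      simp [this]
  have step2 : (∫⁻ x, ∫⁻ u, K (x, u)) = ∫⁻ u, ∫⁻ x, K (x, u) :=
    lintegral_lintegral_swap hKmeas.aemeasurable
  have hIoo : ∀ u : ℝ, 0 < u → (∫⁻ x in Set.Ioo (0:ℝ) u, ENNReal.ofReal (x ^ k))
      = ENNReal.ofReal (u ^ (k + 1) / (k + 1)) := by
    intro u hu
    have hint : IntegrableOn (fun x : ℝ => x ^ k) (Set.Ioo (0:ℝ) u) := by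
      apply ((intervalIntegral.intervalIntegrable_pow k (a := 0) (b := u)
        (μ := volume)).1).mono_set
      exact Set.Ioo_subset_Ioc_self
    rw [← ofReal_integral_eq_lintegral_ofReal hint ?_]
    · congr 1
      rw [← integral_Ioc_eq_integral_Ioo, ← intervalIntegral.integral_of_le hu.le,
        integral_pow]
      simp
    · filter_upwards [ae_restrict_mem measurableSet_Ioo] with x hx
      exact pow_nonneg hx.1.le k
  have step3 : (∫⁻ u, ∫⁻ x, K (x, u))
      = ∫⁻ u in Set.Ioi (0:ℝ), ENNReal.ofReal (u ^ k * p u / (k + 1)) := by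
    rw [lint_Ioi_of_zero (fun u => ∫⁻ x, K (x, u)) ?_]
    · apply setLIntegral_congr_fun measurableSet_Ioi
      intro u hu; beta_reduce
      have hu' : (0:ℝ) < u := hu
      have h3 : ∀ᵐ x : ℝ, K (x, u)
          = (Set.Ioo 0 u).indicator (fun x => ENNReal.ofReal (x ^ k) * ENNReal.ofReal (p u / u)) x := by
        filter_upwards with x
        by_cases hx : 0 < x ∧ x < u
        · simp [hK, hx.1, hx.2, Set.indicator_of_mem (show x ∈ Set.Ioo 0 u from hx)]
        · rw [Set.indicator_of_notMem (show x ∉ Set.Ioo 0 u from hx)]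
          simp only [hK]
          rw [if_neg hx]
      rw [lintegral_congr_ae h3, lintegral_indicator measurableSet_Ioo,
        lintegral_mul_const' _ _ ENNReal.ofReal_ne_top, hIoo u hu',
        ← ENNReal.ofReal_mul (by positivity)]
      congr 1
      have hu'' : u ≠ 0 := ne_of_gt hu'
      field_simp
      ring
    · intro u hu
      have : ∀ x : ℝ, K (x, u) = 0 := by
        intro x
        simp only [hK]
        rw [if_neg]
        rintro ⟨h1, h2⟩
        linarith
      simp [this]
  rw [step1, step2, step3, ← ofReal_integral_eq_lintegral_ofReal]
  · congr 1
    rw [← integral_div]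
  · exact hmk.div_const ((k : ℝ) + 1)
  · filter_upwards [ae_restrict_mem measurableSet_Ioi] with x hx
    have h1 := hpnn x
    have h2 : (0:ℝ) < x := hx
    positivity

end

/-- The first four moments of the equilibrium distribution of the mixed model. -/
theorem mixed_model_moments (μ : ℝ) (hμ0 : 0 ≤ μ) (hμ1 : μ ≤ 1)
    (p : ℝ → ℝ) (w : ℝ)
    (hpm : Measurable p) (hpnn : ∀ x, 0 ≤ p x)
    (hpint : IntegrableOn p (Set.Ioi 0)) (hp1 : ∫ x in Set.Ioi (0:ℝ), p x = 1)
    (hS : IntegrableOn (fun u => p u / u) (Set.Ioi 0))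
    (hM4 : IntegrableOn (fun x => x ^ 4 * p x) (Set.Ioi 0))
    (hw : ∫ x in Set.Ioi (0:ℝ), x * p x = w)
    (heq : ∀ x : ℝ, 0 < x → p x = μ * TD p x + (1 - μ) * T p x) :
    (∫ x in Set.Ioi (0:ℝ), x * p x = w) ∧
    (∫ x in Set.Ioi (0:ℝ), x ^ 2 * p x = 3 / (2 - μ) * w ^ 2) ∧
    (∫ x in Set.Ioi (0:ℝ), x ^ 3 * p x = 3 * (4 + μ) / (2 - μ) ^ 2 * w ^ 3) ∧
    (∫ x in Set.Ioi (0:ℝ), x ^ 4 * p x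
      = 5 * (μ ^ 2 + 8 * μ + 12) / (2 - μ) ^ 3 * w ^ 4) := by
  -- moments
  set m : ℕ → ℝ := fun k => ∫ x in Set.Ioi (0:ℝ), x ^ k * p x with hm
  have hm_int : ∀ k : ℕ, k ≤ 4 → IntegrableOn (fun x => x ^ k * p x) (Set.Ioi 0) := by
    intro k hk
    apply Integrable.mono' (hpint.add hM4)
    · exact ((measurable_id'.pow_const k).mul hpm).aestronglyMeasurable
    · filter_upwards [ae_restrict_mem measurableSet_Ioi] with x hx
      have hx' : (0:ℝ) < x := hx
      have hb : x ^ k ≤ 1 + x ^ 4 := by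
        rcases le_total x 1 with h1 | h1
        · have h2 : x ^ k ≤ 1 := pow_le_one₀ hx'.le h1
          nlinarith [pow_nonneg hx'.le 4]
        · have h2 : x ^ k ≤ x ^ 4 := pow_le_pow_right₀ h1 hk
          nlinarith [pow_nonneg hx'.le k]
      rw [Real.norm_eq_abs, abs_of_nonneg (mul_nonneg (pow_nonneg hx'.le k) (hpnn x))]
      simp only [Pi.add_apply]
      nlinarith [hpnn x, mul_le_mul_of_nonneg_right hb (hpnn x)]
  have hm_nonneg : ∀ k : ℕ, 0 ≤ m k := by
    intro k
    apply setIntegral_nonneg measurableSet_Ioi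
    intro x hx
    exact mul_nonneg (pow_nonneg (le_of_lt hx) k) (hpnn x)
  have hm0 : m 0 = 1 := by
    rw [hm]; simpa using hp1
  have hm1 : m 1 = w := by
    rw [hm]; simpa using hw
  -- the function S and its truncations
  set c : ℝ := ∫ u in Set.Ioi (0:ℝ), p u / u with hc
  have hc0 : 0 ≤ c := by
    apply setIntegral_nonneg measurableSet_Ioi
    intro u hu
    exact div_nonneg (hpnn u) (le_of_lt hu)
  set σ : ℝ → ℝ := (Set.Ioi (0:ℝ)).indicator (S p) with hσ
  set q : ℝ → ℝ := (Set.Ioi (0:ℝ)).indicator p with hq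
  have hσeq : ∀ x : ℝ, 0 < x → σ x = S p x := by
    intro x hx; rw [hσ, Set.indicator_of_mem (show x ∈ Set.Ioi 0 from hx)]
  have hσ0 : ∀ x : ℝ, x ≤ 0 → σ x = 0 := by
    intro x hx; rw [hσ, Set.indicator_of_notMem (by simpa using hx)]
  have hq0 : ∀ x : ℝ, x ≤ 0 → q x = 0 := by
    intro x hx; rw [hq, Set.indicator_of_notMem (by simpa using hx)]
  have hσm : Measurable σ := by
    have : σ = (Set.Ioi (0:ℝ)).indicator
        (fun x => c - ∫ u in Set.Ioc (0:ℝ) x, p u / u) := by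
      funext x
      by_cases hx : x ∈ Set.Ioi (0:ℝ)
      · rw [hσ, Set.indicator_of_mem hx, Set.indicator_of_mem hx, S_eq hS hx]
      · rw [hσ, Set.indicator_of_notMem hx, Set.indicator_of_notMem hx]
    rw [this]
    exact (Sm_measurable hpnn hS).indicator measurableSet_Ioi
  have hqm : Measurable q := hpm.indicator measurableSet_Ioi
  have hσnn : ∀ x : ℝ, 0 ≤ σ x := by
    intro x
    rcases le_or_gt x 0 with hx | hx
    · rw [hσ0 x hx]
    · rw [hσeq x hx]; exact S_nonneg hpnn hx
  have hqnn : ∀ x : ℝ, 0 ≤ q x := by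
    intro x
    rcases le_or_gt x 0 with hx | hx
    · rw [hq0 x hx]
    · rw [hq, Set.indicator_of_mem (show x ∈ Set.Ioi 0 from hx)]; exact hpnn x
  have hσle : ∀ x : ℝ, σ x ≤ c := by
    intro x
    rcases le_or_gt x 0 with hx | hx
    · rw [hσ0 x hx]; exact hc0
    · rw [hσeq x hx]; exact S_le hpnn hS hx
  have hqint : Integrable q := (integrable_indicator_iff measurableSet_Ioi).2 hpint
  have hane : ∀ x : ℝ, ∀ᵐ v : ℝ, v ≠ x := by
    intro x
    rw [ae_iff]
    simpa using measure_singleton x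
  -- convolution representations
  have hTval : ∀ x : ℝ, 0 < x → T p x = ∫ v, σ (x - v) * σ v := by
    intro x hx
    rw [T, intervalIntegral.integral_of_le hx.le]
    have h1 : ∫ v in Set.Ioc (0:ℝ) x, S p (x - v) * S p v
        = ∫ v in Set.Ioc (0:ℝ) x, σ (x - v) * σ v := by
      apply setIntegral_congr_ae measurableSet_Ioc
      filter_upwards [hane x] with v hvne hv
      have hv2 : v < x := lt_of_le_of_ne hv.2 hvne
      rw [hσeq (x - v) (by linarith), hσeq v hv.1]
    rw [h1, setIntegral_eq_integral_of_forall_compl_eq_zero]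
    intro v hv
    rcases le_or_gt v 0 with h | h
    · rw [hσ0 v h, mul_zero]
    · have : x < v := by
        by_contra hcon
        exact hv ⟨h, not_lt.mp hcon⟩
      rw [hσ0 (x - v) (by linarith), zero_mul]
  have hCval : ∀ x : ℝ, 0 < x →
      (∫ u in (0:ℝ)..x, p (x - u) * S p u) = ∫ u, q (x - u) * σ u := by
    intro x hx
    rw [intervalIntegral.integral_of_le hx.le]
    have h1 : ∫ u in Set.Ioc (0:ℝ) x, p (x - u) * S p u
        = ∫ u in Set.Ioc (0:ℝ) x, q (x - u) * σ u := by
      apply setIntegral_congr_ae measurableSet_Ioc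
      filter_upwards [hane x] with u hune hu
      have hu2 : u < x := lt_of_le_of_ne hu.2 hune
      rw [hσeq u hu.1, hq, Set.indicator_of_mem (show x - u ∈ Set.Ioi 0 by simp; linarith)]
    rw [h1, setIntegral_eq_integral_of_forall_compl_eq_zero]
    intro u hu
    rcases le_or_gt u 0 with h | h
    · rw [hσ0 u h, mul_zero]
    · have : x < u := by
        by_contra hcon
        exact hu ⟨h, not_lt.mp hcon⟩
      rw [hq0 (x - u) (by linarith), zero_mul]
  -- integrability of the convolution integrands
  have hTint : ∀ x : ℝ, Integrable (fun v => σ (x - v) * σ v) := by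
    intro x
    apply Integrable.mono' (g := (Set.Icc (0:ℝ) x).indicator (fun _ => c * c))
    · exact (IntegrableOn.integrable_indicator
        (integrableOn_const measure_Icc_lt_top.ne) measurableSet_Icc)
    · exact ((hσm.comp (measurable_const.sub measurable_id')).mul hσm).aestronglyMeasurable
    · filter_upwards with v
      rw [Real.norm_eq_abs, abs_of_nonneg (mul_nonneg (hσnn _) (hσnn _))]
      by_cases hv : v ∈ Set.Icc (0:ℝ) x
      · rw [Set.indicator_of_mem hv]
        exact mul_le_mul (hσle _) (hσle _) (hσnn _) hc0
      · rw [Set.indicator_of_notMem hv]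
        rcases not_and_or.mp hv with h | h
        · rw [hσ0 v (le_of_not_ge h), mul_zero]
        · rw [hσ0 (x - v) (by push_neg at h; linarith), zero_mul]
  have hCint : ∀ x : ℝ, Integrable (fun u => q (x - u) * σ u) := by
    intro x
    apply Integrable.mono' (g := fun u => c * q (x - u))
    · exact ((integrable_comp_sub_left q x).2 hqint).const_mul c
    · exact ((hqm.comp (measurable_const.sub measurable_id')).mul hσm).aestronglyMeasurable
    · filter_upwards with u
      rw [Real.norm_eq_abs, abs_of_nonneg (mul_nonneg (hqnn _) (hσnn _))]
      calc q (x - u) * σ u ≤ q (x - u) * c :=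
            mul_le_mul_of_nonneg_left (hσle _) (hqnn _)
        _ = c * q (x - u) := mul_comm _ _
  -- nonnegativity of T and the inner convolution
  have hTnn : ∀ x : ℝ, 0 < x → 0 ≤ T p x := by
    intro x hx
    rw [hTval x hx]
    exact integral_nonneg fun v => mul_nonneg (hσnn _) (hσnn _)
  have hCnn : ∀ x : ℝ, 0 < x → 0 ≤ ∫ u in (0:ℝ)..x, p (x - u) * S p u := by
    intro x hx
    rw [hCval x hx]
    exact integral_nonneg fun v => mul_nonneg (hqnn _) (hσnn _)
  -- ofReal forms
  have hT_ofReal : ∀ x : ℝ, 0 < x → ENNReal.ofReal (T p x)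
      = ∫⁻ v, ENNReal.ofReal (σ (x - v)) * ENNReal.ofReal (σ v) := by
    intro x hx
    rw [hTval x hx, ofReal_integral_eq_lintegral_ofReal (hTint x)
      (Filter.Eventually.of_forall fun v => mul_nonneg (hσnn _) (hσnn _))]
    apply lintegral_congr
    intro v
    rw [ENNReal.ofReal_mul (hσnn _)]
  have hC_ofReal : ∀ x : ℝ, 0 < x → ENNReal.ofReal (∫ u in (0:ℝ)..x, p (x - u) * S p u)
      = ∫⁻ u, ENNReal.ofReal (q (x - u)) * ENNReal.ofReal (σ u) := by
    intro x hx
    rw [hCval x hx, ofReal_integral_eq_lintegral_ofReal (hCint x)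
      (Filter.Eventually.of_forall fun v => mul_nonneg (hqnn _) (hσnn _))]
    apply lintegral_congr
    intro v
    rw [ENNReal.ofReal_mul (hqnn _)]
  -- lintegral moment facts
  have hA : ∀ k : ℕ, k ≤ 4 →
      (∫⁻ x in Set.Ioi (0:ℝ), ENNReal.ofReal (x ^ k * p x)) = ENNReal.ofReal (m k) := by
    intro k hk
    rw [← ofReal_integral_eq_lintegral_ofReal (hm_int k hk)]
    filter_upwards [ae_restrict_mem measurableSet_Ioi] with x hx
    exact mul_nonneg (pow_nonneg (le_of_lt hx) k) (hpnn x)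
  have hSB : ∀ k : ℕ, k ≤ 4 →
      (∫⁻ x in Set.Ioi (0:ℝ), ENNReal.ofReal (x ^ k * S p x))
        = ENNReal.ofReal (m k / (k + 1)) :=
    fun k hk => S_moment hpm hpnn hS k (hm_int k hk)
  have hAσ : ∀ k : ℕ, k ≤ 4 →
      (∫⁻ u in Set.Ioi (0:ℝ), ENNReal.ofReal (u ^ k) * ENNReal.ofReal (σ u))
        = ENNReal.ofReal (m k / (k + 1)) := by
    intro k hk
    rw [← hSB k hk]
    apply setLIntegral_congr_fun measurableSet_Ioi
    intro u hu; beta_reduce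
    rw [hσeq u hu, ← ENNReal.ofReal_mul (pow_nonneg (le_of_lt hu) k)]
  have hAq : ∀ k : ℕ, k ≤ 4 →
      (∫⁻ u in Set.Ioi (0:ℝ), ENNReal.ofReal (u ^ k) * ENNReal.ofReal (q u))
        = ENNReal.ofReal (m k) := by
    intro k hk
    rw [← hA k hk]
    apply setLIntegral_congr_fun measurableSet_Ioi
    intro u hu; beta_reduce
    rw [hq, Set.indicator_of_mem (show u ∈ Set.Ioi 0 from hu),
      ← ENNReal.ofReal_mul (pow_nonneg (le_of_lt hu) k)]
  -- the master moment equation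
  have hE : ∀ k : ℕ, k ≤ 4 →
      m k = μ/2 * (∑ j ∈ Finset.range (k+1),
            (k.choose j : ℝ) * (m j * (m (k-j) / ((k - j : ℕ) + 1))))
        + μ/2 * (m k / (k+1))
        + (1-μ) * (∑ j ∈ Finset.range (k+1),
            (k.choose j : ℝ) * ((m j / (j+1)) * (m (k-j) / ((k - j : ℕ) + 1)))) := by
    intro k hk
    set Φ : ℝ → ℝ≥0∞ := fun u => ENNReal.ofReal (σ u) with hΦ
    set Ψ : ℝ → ℝ≥0∞ := fun u => ENNReal.ofReal (q u) with hΨ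
    have hΦm : Measurable Φ := hσm.ennreal_ofReal
    have hΨm : Measurable Ψ := hqm.ennreal_ofReal
    have hΦ0 : ∀ x ≤ (0:ℝ), Φ x = 0 := by
      intro x hx; rw [hΦ]; simp [hσ0 x hx]
    have hΨ0 : ∀ x ≤ (0:ℝ), Ψ x = 0 := by
      intro x hx; rw [hΨ]; simp [hq0 x hx]
    set S1 : ℝ := ∑ j ∈ Finset.range (k+1),
        (k.choose j : ℝ) * (m j * (m (k-j) / ((k - j : ℕ) + 1))) with hS1def
    set S2 : ℝ := ∑ j ∈ Finset.range (k+1),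
        (k.choose j : ℝ) * ((m j / (j+1)) * (m (k-j) / ((k - j : ℕ) + 1))) with hS2def
    have hS1nn : 0 ≤ S1 := by
      apply Finset.sum_nonneg
      intro j hj
      have h1 : (0:ℝ) ≤ ((k - j : ℕ) : ℝ) + 1 := by positivity
      exact mul_nonneg (Nat.cast_nonneg _)
        (mul_nonneg (hm_nonneg j) (div_nonneg (hm_nonneg _) h1))
    have hS2nn : 0 ≤ S2 := by
      apply Finset.sum_nonneg
      intro j hj
      have h1 : (0:ℝ) ≤ ((k - j : ℕ) : ℝ) + 1 := by positivity
      have h2 : (0:ℝ) ≤ (j : ℝ) + 1 := by positivity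
      exact mul_nonneg (Nat.cast_nonneg _)
        (mul_nonneg (div_nonneg (hm_nonneg j) h2) (div_nonneg (hm_nonneg _) h1))
    have hμ2 : (0:ℝ) ≤ μ/2 := by linarith
    have h1μ : (0:ℝ) ≤ 1 - μ := by linarith
    have hmk1 : (0:ℝ) ≤ m k / (k + 1) := div_nonneg (hm_nonneg k) (by positivity)
    have hmeas1 : Measurable fun x : ℝ =>
        ENNReal.ofReal (μ/2) * (ENNReal.ofReal (x ^ k) * ∫⁻ u, Ψ (x - u) * Φ u) := by
      apply Measurable.const_mul
      apply Measurable.mul (measurable_id'.pow_const k).ennreal_ofReal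
      exact Measurable.lintegral_prod_right'
        (f := fun z : ℝ × ℝ => Ψ (z.1 - z.2) * Φ z.2)
        ((hΨm.comp (measurable_fst.sub measurable_snd)).mul (hΦm.comp measurable_snd))
    have hmeas3 : Measurable fun x : ℝ =>
        ENNReal.ofReal (1 - μ) * (ENNReal.ofReal (x ^ k) * ∫⁻ v, Φ (x - v) * Φ v) := by
      apply Measurable.const_mul
      apply Measurable.mul (measurable_id'.pow_const k).ennreal_ofReal
      exact Measurable.lintegral_prod_right'
        (f := fun z : ℝ × ℝ => Φ (z.1 - z.2) * Φ z.2)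
        ((hΦm.comp (measurable_fst.sub measurable_snd)).mul (hΦm.comp measurable_snd))
    have hmeas2 : AEMeasurable (fun x : ℝ =>
        ENNReal.ofReal (μ/2) * ENNReal.ofReal (x ^ k * S p x))
        (volume.restrict (Set.Ioi (0:ℝ))) := by
      apply AEMeasurable.congr (f := fun x : ℝ => ENNReal.ofReal (μ/2) *
        ENNReal.ofReal (x ^ k * ((∫ u in Set.Ioi (0:ℝ), p u / u)
          - ∫ u in Set.Ioc (0:ℝ) x, p u / u)))
      · exact (((measurable_id'.pow_const k).mul (Sm_measurable hpnn hS)).ennreal_ofReal.const_mul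
          _).aemeasurable.restrict
      · rw [Filter.EventuallyEq, ae_restrict_iff' measurableSet_Ioi]
        filter_upwards with x hx
        rw [S_eq hS hx]
    have key : ENNReal.ofReal (m k)
        = ENNReal.ofReal (μ/2 * S1 + μ/2 * (m k / (k+1)) + (1-μ) * S2) := by
      calc ENNReal.ofReal (m k)
          = ∫⁻ x in Set.Ioi (0:ℝ), ENNReal.ofReal (x ^ k * p x) := (hA k hk).symm
        _ = ∫⁻ x in Set.Ioi (0:ℝ),
              (ENNReal.ofReal (μ/2) * (ENNReal.ofReal (x ^ k) * ∫⁻ u, Ψ (x - u) * Φ u)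
              + ENNReal.ofReal (μ/2) * ENNReal.ofReal (x ^ k * S p x)
              + ENNReal.ofReal (1 - μ) * (ENNReal.ofReal (x ^ k) * ∫⁻ v, Φ (x - v) * Φ v)) := by
            apply setLIntegral_congr_fun measurableSet_Ioi
            intro x hx; beta_reduce
            have hx' : (0:ℝ) < x := hx
            have hsplit : x ^ k * p x
                = μ/2 * (x ^ k * (∫ u in (0:ℝ)..x, p (x - u) * S p u))
                + μ/2 * (x ^ k * S p x) + (1 - μ) * (x ^ k * T p x) := by
              rw [heq x hx', TD]; ring
            have ha1 : (0:ℝ) ≤ μ/2 * (x ^ k * (∫ u in (0:ℝ)..x, p (x - u) * S p u)) :=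
              mul_nonneg hμ2 (mul_nonneg (pow_nonneg hx'.le k) (hCnn x hx'))
            have ha2 : (0:ℝ) ≤ μ/2 * (x ^ k * S p x) :=
              mul_nonneg hμ2 (mul_nonneg (pow_nonneg hx'.le k) (S_nonneg hpnn hx'))
            have ha3 : (0:ℝ) ≤ (1 - μ) * (x ^ k * T p x) :=
              mul_nonneg h1μ (mul_nonneg (pow_nonneg hx'.le k) (hTnn x hx'))
            have e1 : ENNReal.ofReal (μ/2 * (x ^ k * (∫ u in (0:ℝ)..x, p (x - u) * S p u)))
                = ENNReal.ofReal (μ/2) * (ENNReal.ofReal (x ^ k) * ∫⁻ u, Ψ (x - u) * Φ u) := by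
              rw [ENNReal.ofReal_mul hμ2, ENNReal.ofReal_mul (pow_nonneg hx'.le k),
                hC_ofReal x hx']
            have e2 : ENNReal.ofReal (μ/2 * (x ^ k * S p x))
                = ENNReal.ofReal (μ/2) * ENNReal.ofReal (x ^ k * S p x) :=
              ENNReal.ofReal_mul hμ2
            have e3 : ENNReal.ofReal ((1 - μ) * (x ^ k * T p x))
                = ENNReal.ofReal (1 - μ) * (ENNReal.ofReal (x ^ k) * ∫⁻ v, Φ (x - v) * Φ v) := by
              rw [ENNReal.ofReal_mul h1μ, ENNReal.ofReal_mul (pow_nonneg hx'.le k),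
                hT_ofReal x hx']
            rw [hsplit, ENNReal.ofReal_add (by linarith) ha3, ENNReal.ofReal_add ha1 ha2,
              e1, e2, e3]
        _ = (∫⁻ x in Set.Ioi (0:ℝ),
              ENNReal.ofReal (μ/2) * (ENNReal.ofReal (x ^ k) * ∫⁻ u, Ψ (x - u) * Φ u))
            + (∫⁻ x in Set.Ioi (0:ℝ), ENNReal.ofReal (μ/2) * ENNReal.ofReal (x ^ k * S p x))
            + (∫⁻ x in Set.Ioi (0:ℝ),
              ENNReal.ofReal (1 - μ) * (ENNReal.ofReal (x ^ k) * ∫⁻ v, Φ (x - v) * Φ v)) := by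
            rw [lintegral_add_right' _ hmeas3.aemeasurable.restrict,
              lintegral_add_right' _ hmeas2]
        _ = ENNReal.ofReal (μ/2) * ENNReal.ofReal S1
            + ENNReal.ofReal (μ/2) * ENNReal.ofReal (m k / (k+1))
            + ENNReal.ofReal (1 - μ) * ENNReal.ofReal S2 := by
            congr 1
            · congr 1
              · rw [lintegral_const_mul' _ _ ENNReal.ofReal_ne_top,
                  conv_lintegral_moment Ψ Φ hΨm hΦm hΨ0 hΦ0 k]
                congr 1
                rw [hS1def, ENNReal.ofReal_sum_of_nonneg]
                · refine Finset.sum_congr rfl fun j hj => ?_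
                  have hj' : j < k + 1 := Finset.mem_range.mp hj
                  have hj4 : j ≤ 4 := by omega
                  have hkj4 : k - j ≤ 4 := by omega
                  rw [hAq j hj4, hAσ (k - j) hkj4,
                    ENNReal.ofReal_mul (Nat.cast_nonneg _),
                    ENNReal.ofReal_mul (hm_nonneg j), ENNReal.ofReal_natCast]
                · intro j hj
                  have h1 : (0:ℝ) ≤ ((k - j : ℕ) : ℝ) + 1 := by positivity
                  exact mul_nonneg (Nat.cast_nonneg _)
                    (mul_nonneg (hm_nonneg j) (div_nonneg (hm_nonneg _) h1))
              · rw [lintegral_const_mul' _ _ ENNReal.ofReal_ne_top, hSB k hk]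
            · rw [lintegral_const_mul' _ _ ENNReal.ofReal_ne_top,
                conv_lintegral_moment Φ Φ hΦm hΦm hΦ0 hΦ0 k]
              congr 1
              rw [hS2def, ENNReal.ofReal_sum_of_nonneg]
              · refine Finset.sum_congr rfl fun j hj => ?_
                have hj' : j < k + 1 := Finset.mem_range.mp hj
                have hj4 : j ≤ 4 := by omega
                have hkj4 : k - j ≤ 4 := by omega
                rw [hAσ j hj4, hAσ (k - j) hkj4,
                  ENNReal.ofReal_mul (Nat.cast_nonneg _),
                  ENNReal.ofReal_mul (div_nonneg (hm_nonneg j) (by positivity)),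
                  ENNReal.ofReal_natCast]
              · intro j hj
                have h1 : (0:ℝ) ≤ ((k - j : ℕ) : ℝ) + 1 := by positivity
                have h2 : (0:ℝ) ≤ (j : ℝ) + 1 := by positivity
                exact mul_nonneg (Nat.cast_nonneg _)
                  (mul_nonneg (div_nonneg (hm_nonneg j) h2) (div_nonneg (hm_nonneg _) h1))
        _ = ENNReal.ofReal (μ/2 * S1 + μ/2 * (m k / (k+1)) + (1-μ) * S2) := by
            rw [← ENNReal.ofReal_mul hμ2, ← ENNReal.ofReal_mul hμ2,
              ← ENNReal.ofReal_mul h1μ,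
              ← ENNReal.ofReal_add (mul_nonneg hμ2 hS1nn) (mul_nonneg hμ2 hmk1),
              ← ENNReal.ofReal_add (by nlinarith) (mul_nonneg h1μ hS2nn)]
    have := (ENNReal.ofReal_eq_ofReal_iff (hm_nonneg k)
      (by nlinarith [mul_nonneg hμ2 hS1nn, mul_nonneg hμ2 hmk1, mul_nonneg h1μ hS2nn])).1 key
    exact this
  -- extract the explicit equations and solve
  have h2ne : (2:ℝ) - μ ≠ 0 := by linarith
  have E2 := hE 2 (by norm_num)
  have E3 := hE 3 (by norm_num)
  have E4 := hE 4 (by norm_num)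
  simp only [Finset.sum_range_succ, Finset.sum_range_zero] at E2 E3 E4
  norm_num [Nat.choose] at E2 E3 E4
  rw [hm0, hm1] at E2 E3 E4
  have hm2' : m 2 * (2 - μ) = 3 * w ^ 2 := by linear_combination 6 * E2
  have key3 : m 3 * (2 - μ) ^ 2 = 3 * (4 + μ) * w ^ 3 := by
    have k3 : m 3 * (2 - μ) = (4 + μ) * (w * m 2) := by linear_combination 4 * E3
    linear_combination (2 - μ) * k3 + (4 + μ) * w * hm2'
  have key4 : m 4 * (2 - μ) ^ 3 = 5 * (μ ^ 2 + 8 * μ + 12) * w ^ 4 := by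
    have k4 : 9 * ((2 - μ) * m 4) = (30 + 15 * μ) * (w * m 3) + (20 + 10 * μ) * m 2 ^ 2 := by
      linear_combination 30 * E4
    linear_combination ((2 - μ) ^ 2 / 9) * k4 + ((30 + 15 * μ) / 9) * w * key3
      + ((20 + 10 * μ) / 9) * (m 2 * (2 - μ) + 3 * w ^ 2) * hm2'
  refine ⟨hw, ?_, ?_, ?_⟩
  · show m 2 = 3 / (2 - μ) * w ^ 2
    field_simp
    linear_combination hm2'
  · show m 3 = 3 * (4 + μ) / (2 - μ) ^ 2 * w ^ 3
    field_simp
    linear_combination key3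
  · show m 4 = 5 * (μ ^ 2 + 8 * μ + 12) / (2 - μ) ^ 3 * w ^ 4
    field_simp
    linear_combination key4
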